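/- For every integer K ≥ 1 and all integers 1 ≤ k ≤ l ≤ K, the log-canonical bracket of the cluster parametrization satisfies {s_{2k}, s_{2l+1}}_y = δ_{k,l} + s_{2k} s_{2l+1}, as an identity of rational functions of y on (ℂ*)^{2K}; in particular the bracket equals 1 + s_{2k} s_{2k+1} when l = k and equals s_{2k} s_{2l+1} when l > k. -/

import Mathlib

noncomputable section

open Finset

/-- The space of cluster variables `(y_1, …, y_{2K})`; we use 1-based indexing, so the
vector has `2K+1` slots and slot `0` is a dummy unused coordinate. -/
abbrev YV (K : ℕ) := Fin (2*K+1) → ℂ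

/-- Access `y_j` by its (1-based) natural-number index. -/
def yv (K : ℕ) (y : YV K) (j : ℕ) : ℂ := y ⟨j % (2*K+1), Nat.mod_lt _ (by omega)⟩

/-- Partial derivative with respect to `y_i`. -/
def pY (K : ℕ) (i : Fin (2*K+1)) (f : YV K → ℂ) (y : YV K) : ℂ :=
  fderiv ℂ f y (Pi.single i 1)

/-- The log-canonical bracket
`{f, g}_y = (1/4) Σ_{i=1}^{2K−1} y_i y_{i+1} (∂f/∂y_i ∂g/∂y_{i+1} − ∂f/∂y_{i+1} ∂g/∂y_i)`. -/
def lcBr (K : ℕ) (f g : YV K → ℂ) (y : YV K) : ℂ :=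
  (1/4 : ℂ) * ∑ i : Fin (2*K-1),
    yv K y ((i:ℕ)+1) * yv K y ((i:ℕ)+2) *
      (pY K ⟨(i:ℕ)+1, by have := i.isLt; omega⟩ f y *
         pY K ⟨(i:ℕ)+2, by have := i.isLt; omega⟩ g y
       - pY K ⟨(i:ℕ)+2, by have := i.isLt; omega⟩ f y *
         pY K ⟨(i:ℕ)+1, by have := i.isLt; omega⟩ g y)

/-- `nestList [a₁, …, a_m] = 1 + a₁(1 + a₂(⋯(1 + a_m)⋯))`. -/
def nestList : List ℂ → ℂ
  | [] => 1
  | a :: t => 1 + a * nestList t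

/-- The Stokes parameters `s_n`, `n = 1, …, 2K+2` (paper's 1-based indexing) of the
cluster parametrization:
`s_1 = −y_1^{−2}`;
`s_{2k} = (1+y_{2k}²)·∏_{j=1}^{2k} y_j^{2(−1)^{j+1}}` for `k = 1, …, K`;
`s_{2k+1} = −(1+y_{2k+1}²)·∏_{j=1}^{2k+1} y_j^{2(−1)^{j}}` for `k = 1, …, K−1`;
`s_{2K+1} = −∏_{j=1}^{2K} y_j^{2(−1)^{j}}`;
`s_{2K+2} = y_1²·(1+y_2²(1+y_4²(⋯(1+y_{2K}²)⋯)))·∏_{j=1}^{K} y_{2j}^{−4}`. -/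
def sY (K : ℕ) (n : ℕ) (y : YV K) : ℂ :=
  if n = 1 then -(yv K y 1) ^ (-2 : ℤ)
  else if n = 2*K+1 then -∏ j ∈ range (2*K), (yv K y (j+1)) ^ ((-1:ℤ)^(j+1) * 2)
  else if n = 2*K+2 then
    (yv K y 1)^2 * nestList (List.ofFn fun k : Fin K => (yv K y (2*(k:ℕ)+2))^2)
      * ∏ j ∈ range K, (yv K y (2*(j+1))) ^ (-4 : ℤ)
  else if n % 2 = 0 then
    (1 + (yv K y n)^2) * ∏ j ∈ range n, (yv K y (j+1)) ^ ((-1:ℤ)^j * 2)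
  else -((1 + (yv K y n)^2) * ∏ j ∈ range n, (yv K y (j+1)) ^ ((-1:ℤ)^(j+1) * 2))

/-- `λ = ∏_{j=1}^K y_{2j}²`. -/
def lamY (K : ℕ) (y : YV K) : ℂ := ∏ j ∈ range K, (yv K y (2*(j+1)))^2

namespace Cl

/-- Monomial in the cluster variables with integer exponent vector `e`. -/
def mono (K : ℕ) (e : Fin (2*K+1) → ℤ) : YV K → ℂ := fun y => ∏ j, (y j) ^ (e j)

lemma mono_hasFDerivAt {K : ℕ} (e : Fin (2*K+1) → ℤ) (y : YV K)
    (hy : ∀ j, e j ≠ 0 → y j ≠ 0) :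
    HasFDerivAt (mono K e)
      (∑ j, (∏ m ∈ univ.erase j, (y m) ^ (e m)) •
        (((e j : ℂ) * (y j) ^ (e j - 1)) •
          ContinuousLinearMap.proj (R := ℂ) (φ := fun _ : Fin (2*K+1) => ℂ) j)) y := by
  have h : ∀ j ∈ (univ : Finset (Fin (2*K+1))), HasFDerivAt (fun z : YV K => (z j) ^ (e j))
      (((e j : ℂ) * (y j) ^ (e j - 1)) •
        ContinuousLinearMap.proj (R := ℂ) (φ := fun _ : Fin (2*K+1) => ℂ) j) y := by
    intro j _
    have hz : y j ≠ 0 ∨ 0 ≤ e j := by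
      by_cases h0 : e j = 0
      · exact Or.inr (by simp [h0])
      · exact Or.inl (hy j h0)
    have hp : HasFDerivAt (fun z : YV K => z j)
        (ContinuousLinearMap.proj (R := ℂ) (φ := fun _ : Fin (2*K+1) => ℂ) j) y :=
      (ContinuousLinearMap.proj (R := ℂ) (φ := fun _ : Fin (2*K+1) => ℂ) j).hasFDerivAt
    exact (hasDerivAt_zpow (e j) (y j) hz).comp_hasFDerivAt y hp
  exact HasFDerivAt.finset_prod h

lemma mono_diff {K : ℕ} (e : Fin (2*K+1) → ℤ) (y : YV K)
    (hy : ∀ j, e j ≠ 0 → y j ≠ 0) : DifferentiableAt ℂ (mono K e) y :=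
  (mono_hasFDerivAt e y hy).differentiableAt

lemma pY_mono {K : ℕ} (e : Fin (2*K+1) → ℤ) (y : YV K)
    (hy : ∀ j, e j ≠ 0 → y j ≠ 0) (i : Fin (2*K+1)) :
    y i * pY K i (mono K e) y = (e i : ℂ) * mono K e y := by
  rw [pY, (mono_hasFDerivAt e y hy).fderiv, ContinuousLinearMap.sum_apply]
  have hterm : ∀ j : Fin (2*K+1),
      ((∏ m ∈ univ.erase j, (y m) ^ (e m)) •
        (((e j : ℂ) * (y j) ^ (e j - 1)) •
          ContinuousLinearMap.proj (R := ℂ) (φ := fun _ : Fin (2*K+1) => ℂ) j)) (Pi.single i 1)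
      = if j = i then (∏ m ∈ univ.erase j, (y m) ^ (e m)) * ((e j : ℂ) * (y j) ^ (e j - 1)) else 0 := by
    intro j
    simp [ContinuousLinearMap.smul_apply, ContinuousLinearMap.proj_apply, Pi.single_apply,
      smul_eq_mul, mul_ite]
  rw [Finset.sum_congr rfl fun j _ => hterm j, Finset.sum_ite_eq' univ i, if_pos (mem_univ i)]
  by_cases h0 : e i = 0
  · simp [h0]
  · have hyi := hy i h0
    have : y i * ((∏ m ∈ univ.erase i, (y m) ^ (e m)) * ((e i : ℂ) * (y i) ^ (e i - 1)))
        = (e i : ℂ) * ((y i * (y i) ^ (e i - 1)) * ∏ m ∈ univ.erase i, (y m) ^ (e m)) := by ring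
    rw [this]
    have h2 : y i * (y i) ^ (e i - 1) = (y i) ^ (e i) := by
      rw [zpow_sub_one₀ hyi]; field_simp
    rw [h2, mono, ← Finset.mul_prod_erase univ _ (mem_univ i)]


/-- Exponent vector: `c·(−1)^{m+1}` on indices `1 ≤ m ≤ n`, `0` elsewhere. -/
def evec (K n : ℕ) (c : ℤ) : Fin (2*K+1) → ℤ :=
  fun m => if 1 ≤ (m:ℕ) ∧ (m:ℕ) ≤ n then c * (-1)^((m:ℕ)+1) else 0

lemma yv_eq {K : ℕ} (y : YV K) (j : ℕ) (h : j < 2*K+1) :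
    yv K y j = y ⟨j, h⟩ := by
  unfold yv
  congr 1
  exact Fin.ext (Nat.mod_eq_of_lt h)

lemma prodA {K n : ℕ} (c : ℤ) (hn : n ≤ 2*K) (z : YV K) :
    ∏ j ∈ range n, (yv K z (j+1)) ^ (c * (-1:ℤ)^j) = mono K (evec K n c) z := by
  rw [mono]
  have h1 : ∀ j : Fin (2*K+1), z j ^ evec K n c j
      = yv K z (j:ℕ) ^ (if 1 ≤ (j:ℕ) ∧ (j:ℕ) ≤ n then c * (-1:ℤ)^((j:ℕ)+1) else 0) := by
    intro j
    rw [evec, yv_eq z (j:ℕ) j.isLt]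
  rw [Finset.prod_congr rfl (fun j _ => h1 j),
    Fin.prod_univ_eq_prod_range (fun m => yv K z m ^ (if 1 ≤ m ∧ m ≤ n then c * (-1:ℤ)^(m+1) else 0)) (2*K+1)]
  rw [← Finset.prod_subset (s₁ := Ico 1 (n+1)) (s₂ := range (2*K+1))
      (fun x hx => by simp at hx ⊢; omega)
      (fun x _ hx => by
        rw [if_neg (by simp at hx; omega), zpow_zero])]
  rw [Finset.prod_Ico_eq_prod_range]
  apply Finset.prod_congr (by norm_num)
  intro j hj
  simp only [mem_range] at hj
  rw [if_pos (by omega), Nat.add_comm 1 j]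
  congr 1
  have : j + 1 + 1 = j + 2 := by omega
  rw [this, pow_add, neg_one_sq, mul_one]

lemma mono_update {K : ℕ} (e : Fin (2*K+1) → ℤ) (z : YV K) (i : Fin (2*K+1))
    (hz : z i ≠ 0) :
    mono K (Function.update e i (e i + 2)) z = z i ^ 2 * mono K e z := by
  rw [mono, mono, ← Finset.mul_prod_erase univ _ (mem_univ i),
    ← Finset.mul_prod_erase univ (fun j => z j ^ e j) (mem_univ i)]
  have h1 : ∏ m ∈ univ.erase i, z m ^ (Function.update e i (e i + 2) m)
      = ∏ m ∈ univ.erase i, z m ^ e m := by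
    apply Finset.prod_congr rfl
    intro m hm
    rw [Function.update_of_ne (Finset.ne_of_mem_erase hm)]
  rw [h1, Function.update_self, zpow_add₀ hz, zpow_two]
  ring

/-- the symplectic pairing of two exponent vectors -/
def omegaS (K : ℕ) (e f : Fin (2*K+1) → ℤ) : ℤ :=
  ∑ i : Fin (2*K-1),
    (e ⟨(i:ℕ)+1, by have := i.isLt; omega⟩ * f ⟨(i:ℕ)+2, by have := i.isLt; omega⟩
     - e ⟨(i:ℕ)+2, by have := i.isLt; omega⟩ * f ⟨(i:ℕ)+1, by have := i.isLt; omega⟩)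

lemma pY_congr {K : ℕ} {f f' : YV K → ℂ} {y : YV K} (h : f =ᶠ[nhds y] f')
    (i : Fin (2*K+1)) : pY K i f y = pY K i f' y := by
  rw [pY, pY, h.fderiv_eq]

lemma pY_add {K : ℕ} {f g : YV K → ℂ} {y : YV K} (hf : DifferentiableAt ℂ f y)
    (hg : DifferentiableAt ℂ g y) (i : Fin (2*K+1)) :
    pY K i (fun z => f z + g z) y = pY K i f y + pY K i g y := by
  rw [pY, pY, pY, fderiv_fun_add hf hg, ContinuousLinearMap.add_apply]

lemma pY_neg {K : ℕ} {f : YV K → ℂ} {y : YV K} (i : Fin (2*K+1)) :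
    pY K i (fun z => -f z) y = -pY K i f y := by
  rw [pY, pY, fderiv_fun_neg, ContinuousLinearMap.neg_apply]

lemma lcBr_congr {K : ℕ} {f f' g g' : YV K → ℂ} {y : YV K}
    (hf : f =ᶠ[nhds y] f') (hg : g =ᶠ[nhds y] g') :
    lcBr K f g y = lcBr K f' g' y := by
  unfold lcBr
  congr 1
  apply Finset.sum_congr rfl
  intro i _
  rw [pY_congr hf, pY_congr hf, pY_congr hg, pY_congr hg]

lemma lcBr_add_left {K : ℕ} {f1 f2 g : YV K → ℂ} {y : YV K}
    (h1 : DifferentiableAt ℂ f1 y) (h2 : DifferentiableAt ℂ f2 y) :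
    lcBr K (fun z => f1 z + f2 z) g y = lcBr K f1 g y + lcBr K f2 g y := by
  unfold lcBr
  rw [← mul_add, ← Finset.sum_add_distrib]
  congr 1
  apply Finset.sum_congr rfl
  intro i _
  rw [pY_add h1 h2, pY_add h1 h2]
  ring

lemma lcBr_add_right {K : ℕ} {f g1 g2 : YV K → ℂ} {y : YV K}
    (h1 : DifferentiableAt ℂ g1 y) (h2 : DifferentiableAt ℂ g2 y) :
    lcBr K f (fun z => g1 z + g2 z) y = lcBr K f g1 y + lcBr K f g2 y := by
  unfold lcBr
  rw [← mul_add, ← Finset.sum_add_distrib]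
  congr 1
  apply Finset.sum_congr rfl
  intro i _
  rw [pY_add h1 h2, pY_add h1 h2]
  ring

lemma lcBr_neg_right {K : ℕ} {f g : YV K → ℂ} {y : YV K} :
    lcBr K f (fun z => -g z) y = -lcBr K f g y := by
  unfold lcBr
  rw [← mul_neg, ← Finset.sum_neg_distrib]
  congr 1
  apply Finset.sum_congr rfl
  intro i _
  rw [pY_neg, pY_neg]
  ring

lemma lcBr_mono {K : ℕ} (e f : Fin (2*K+1) → ℤ) (y : YV K)
    (he : ∀ j, e j ≠ 0 → y j ≠ 0) (hf : ∀ j, f j ≠ 0 → y j ≠ 0) :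
    lcBr K (mono K e) (mono K f) y
      = (omegaS K e f : ℂ) / 4 * (mono K e y * mono K f y) := by
  unfold lcBr
  have hterm : ∀ i : Fin (2*K-1),
      yv K y ((i:ℕ)+1) * yv K y ((i:ℕ)+2) *
      (pY K ⟨(i:ℕ)+1, by have := i.isLt; omega⟩ (mono K e) y *
         pY K ⟨(i:ℕ)+2, by have := i.isLt; omega⟩ (mono K f) y
       - pY K ⟨(i:ℕ)+2, by have := i.isLt; omega⟩ (mono K e) y *
         pY K ⟨(i:ℕ)+1, by have := i.isLt; omega⟩ (mono K f) y)
      = ((e ⟨(i:ℕ)+1, by have := i.isLt; omega⟩ * f ⟨(i:ℕ)+2, by have := i.isLt; omega⟩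
     - e ⟨(i:ℕ)+2, by have := i.isLt; omega⟩ * f ⟨(i:ℕ)+1, by have := i.isLt; omega⟩ : ℤ) : ℂ)
        * (mono K e y * mono K f y) := by
    intro i
    have hi1 : (i:ℕ)+1 < 2*K+1 := by have := i.isLt; omega
    have hi2 : (i:ℕ)+2 < 2*K+1 := by have := i.isLt; omega
    rw [yv_eq y _ hi1, yv_eq y _ hi2]
    have A := pY_mono e y he ⟨(i:ℕ)+1, hi1⟩
    have B := pY_mono e y he ⟨(i:ℕ)+2, hi2⟩
    have C := pY_mono f y hf ⟨(i:ℕ)+1, hi1⟩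
    have D := pY_mono f y hf ⟨(i:ℕ)+2, hi2⟩
    push_cast
    calc y ⟨(i:ℕ)+1, hi1⟩ * y ⟨(i:ℕ)+2, hi2⟩ *
      (pY K ⟨(i:ℕ)+1, hi1⟩ (mono K e) y * pY K ⟨(i:ℕ)+2, hi2⟩ (mono K f) y
       - pY K ⟨(i:ℕ)+2, hi2⟩ (mono K e) y * pY K ⟨(i:ℕ)+1, hi1⟩ (mono K f) y)
        = (y ⟨(i:ℕ)+1, hi1⟩ * pY K ⟨(i:ℕ)+1, hi1⟩ (mono K e) y) *
          (y ⟨(i:ℕ)+2, hi2⟩ * pY K ⟨(i:ℕ)+2, hi2⟩ (mono K f) y)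
        - (y ⟨(i:ℕ)+2, hi2⟩ * pY K ⟨(i:ℕ)+2, hi2⟩ (mono K e) y) *
          (y ⟨(i:ℕ)+1, hi1⟩ * pY K ⟨(i:ℕ)+1, hi1⟩ (mono K f) y) := by ring
      _ = ((e ⟨(i:ℕ)+1, hi1⟩ : ℂ) * mono K e y) * ((f ⟨(i:ℕ)+2, hi2⟩ : ℂ) * mono K f y)
        - ((e ⟨(i:ℕ)+2, hi2⟩ : ℂ) * mono K e y) * ((f ⟨(i:ℕ)+1, hi1⟩ : ℂ) * mono K f y) := by
          rw [A, B, C, D]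
      _ = ((e ⟨(i:ℕ)+1, hi1⟩ : ℂ) * (f ⟨(i:ℕ)+2, hi2⟩ : ℂ)
        - (e ⟨(i:ℕ)+2, hi2⟩ : ℂ) * (f ⟨(i:ℕ)+1, hi1⟩ : ℂ)) * (mono K e y * mono K f y) := by
          ring
  rw [Finset.sum_congr rfl (fun i _ => hterm i), ← Finset.sum_mul, omegaS]
  push_cast
  ring

lemma omega_evec {K n m : ℕ} (hn : 1 ≤ n) (hnm : n ≤ m) (hm : m ≤ 2*K) :
    omegaS K (evec K n 2) (evec K m (-2)) = if n < m then 4 else 0 := by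
  rw [omegaS]
  have hterm : ∀ i : Fin (2*K-1),
      (evec K n 2 ⟨(i:ℕ)+1, by have := i.isLt; omega⟩ *
         evec K m (-2) ⟨(i:ℕ)+2, by have := i.isLt; omega⟩
       - evec K n 2 ⟨(i:ℕ)+2, by have := i.isLt; omega⟩ *
         evec K m (-2) ⟨(i:ℕ)+1, by have := i.isLt; omega⟩)
      = if ((i:ℕ)+1 = n ∧ n < m) then (4:ℤ) else 0 := by
    intro i
    have hp : ((-1:ℤ))^((i:ℕ)+2+1) = -((-1:ℤ))^((i:ℕ)+1+1) := by
      rw [show (i:ℕ)+2+1 = ((i:ℕ)+1+1)+1 from rfl, pow_succ]; ring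
    have hsq : ((-1:ℤ))^((i:ℕ)+1+1) * ((-1:ℤ))^((i:ℕ)+1+1) = 1 := by
      rw [← pow_add]
      exact Even.neg_one_pow ⟨(i:ℕ)+2, by ring⟩
    show (if 1 ≤ (i:ℕ)+1 ∧ (i:ℕ)+1 ≤ n then 2 * (-1:ℤ)^((i:ℕ)+1+1) else 0) *
        (if 1 ≤ (i:ℕ)+2 ∧ (i:ℕ)+2 ≤ m then -2 * (-1:ℤ)^((i:ℕ)+2+1) else 0)
      - (if 1 ≤ (i:ℕ)+2 ∧ (i:ℕ)+2 ≤ n then 2 * (-1:ℤ)^((i:ℕ)+2+1) else 0) *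
        (if 1 ≤ (i:ℕ)+1 ∧ (i:ℕ)+1 ≤ m then -2 * (-1:ℤ)^((i:ℕ)+1+1) else 0)
      = if ((i:ℕ)+1 = n ∧ n < m) then (4:ℤ) else 0
    have hsq2 : ((-1:ℤ))^((i:ℕ)*2) = 1 := by
      rw [pow_mul]
      rcases Nat.even_or_odd (i:ℕ) with h | h
      · rw [h.neg_one_pow]; norm_num
      · rw [h.neg_one_pow]; norm_num
    split_ifs <;> first
      | (exfalso; omega)
      | ring1
      | (rw [hp]; ring1)
      | (rw [hp]; linear_combination (4:ℤ) * hsq)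
  rw [Finset.sum_congr rfl (fun i _ => hterm i)]
  by_cases hlt : n < m
  · have hn1 : n - 1 < 2*K-1 := by omega
    have h2 : ∀ i : Fin (2*K-1),
        (if ((i:ℕ)+1 = n ∧ n < m) then (4:ℤ) else 0)
        = if i = (⟨n-1, hn1⟩ : Fin (2*K-1)) then (4:ℤ) else 0 := by
      intro i
      apply if_congr _ rfl rfl
      rw [Fin.ext_iff]
      simp only []
      constructor
      · rintro ⟨h, -⟩; omega
      · intro h; exact ⟨by omega, hlt⟩
    rw [Finset.sum_congr rfl (fun i _ => h2 i),
      Finset.sum_ite_eq' univ (⟨n-1, hn1⟩ : Fin (2*K-1)) (fun _ => (4:ℤ)),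
      if_pos (mem_univ _), if_pos hlt]
  · simp [hlt]

lemma evec_ne {K n : ℕ} (c : ℤ) {y : YV K}
    (hy : ∀ i : Fin (2*K+1), (i:ℕ) ≠ 0 → y i ≠ 0) :
    ∀ j, evec K n c j ≠ 0 → y j ≠ 0 := by
  intro j hj
  apply hy j
  intro h0
  rw [evec, if_neg (by omega)] at hj
  exact hj rfl

lemma evec_neg (K n : ℕ) : evec K n (-2) = fun j => -(evec K n 2 j) := by
  funext j
  rw [evec, evec]
  split_ifs with h
  · ring
  · ring

lemma mono_neg_mul {K : ℕ} (e : Fin (2*K+1) → ℤ) (y : YV K)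
    (he : ∀ j, e j ≠ 0 → y j ≠ 0) :
    mono K e y * mono K (fun j => -(e j)) y = 1 := by
  rw [mono, mono, ← Finset.prod_mul_distrib]
  apply Finset.prod_eq_one
  intro j _
  by_cases h0 : e j = 0
  · simp [h0]
  · rw [zpow_neg, mul_inv_cancel₀ (zpow_ne_zero _ (he j h0))]

lemma sY_even_rep {K k : ℕ} (hk1 : 1 ≤ k) (hk : k ≤ K) (z : YV K)
    (hz : z ⟨2*k, by omega⟩ ≠ 0) :
    sY K (2*k) z = mono K (evec K (2*k) 2) z + mono K (evec K (2*k-1) 2) z := by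
  rw [sY, if_neg (by omega), if_neg (by omega), if_neg (by omega), if_pos (by omega)]
  have hprod : ∏ j ∈ range (2*k), (yv K z (j+1)) ^ ((-1:ℤ)^j * 2)
      = mono K (evec K (2*k) 2) z := by
    rw [← prodA (2:ℤ) (by omega) z]
    exact Finset.prod_congr rfl fun j _ => by rw [mul_comm]
  rw [hprod]
  have hupd : evec K (2*k-1) 2
      = Function.update (evec K (2*k) 2) ⟨2*k, by omega⟩
          ((evec K (2*k) 2) ⟨2*k, by omega⟩ + 2) := by
    funext m
    by_cases hm : m = (⟨2*k, by omega⟩ : Fin (2*K+1))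
    · rw [hm, Function.update_self, evec, evec]
      rw [if_neg (by simp; omega), if_pos ⟨by simp; omega, by simp⟩]
      have : ((-1:ℤ))^(2*k+1) = -1 := Odd.neg_one_pow ⟨k, by ring⟩
      simp [this]
    · rw [Function.update_of_ne hm, evec, evec]
      have hne : (m:ℕ) ≠ 2*k := fun h => hm (Fin.ext h)
      exact if_congr (by constructor <;> (rintro ⟨a, b⟩; exact ⟨a, by omega⟩)) rfl rfl
  rw [hupd, mono_update _ _ _ hz, yv_eq z (2*k) (by omega)]
  ring

lemma sY_odd_rep {K l : ℕ} (hl1 : 1 ≤ l) (hl : l < K) (z : YV K)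
    (hz : z ⟨2*l+1, by omega⟩ ≠ 0) :
    sY K (2*l+1) z
      = -(mono K (evec K (2*l+1) (-2)) z + mono K (evec K (2*l) (-2)) z) := by
  rw [sY, if_neg (by omega), if_neg (by omega), if_neg (by omega), if_neg (by omega)]
  have hprod : ∏ j ∈ range (2*l+1), (yv K z (j+1)) ^ ((-1:ℤ)^(j+1) * 2)
      = mono K (evec K (2*l+1) (-2)) z := by
    rw [← prodA (-2:ℤ) (by omega) z]
    refine Finset.prod_congr rfl fun j _ => by rw [pow_succ]; ring_nf
  rw [hprod]
  have hupd : evec K (2*l) (-2)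
      = Function.update (evec K (2*l+1) (-2)) ⟨2*l+1, by omega⟩
          ((evec K (2*l+1) (-2)) ⟨2*l+1, by omega⟩ + 2) := by
    funext m
    by_cases hm : m = (⟨2*l+1, by omega⟩ : Fin (2*K+1))
    · rw [hm, Function.update_self, evec, evec]
      rw [if_neg (by simp), if_pos ⟨by simp, by simp⟩]
      have : ((-1:ℤ))^(2*l+1+1) = 1 := Even.neg_one_pow ⟨l+1, by ring⟩
      simp [this]
    · rw [Function.update_of_ne hm, evec, evec]
      have hne : (m:ℕ) ≠ 2*l+1 := fun h => hm (Fin.ext h)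
      exact if_congr (by constructor <;> (rintro ⟨a, b⟩; exact ⟨a, by omega⟩)) rfl rfl
  rw [hupd, mono_update _ _ _ hz, yv_eq z (2*l+1) (by omega)]
  ring

lemma sY_topodd_rep {K : ℕ} (hK : 1 ≤ K) (z : YV K) :
    sY K (2*K+1) z = -(mono K (evec K (2*K) (-2)) z) := by
  rw [sY, if_neg (by omega), if_pos rfl]
  have hprod : ∏ j ∈ range (2*K), (yv K z (j+1)) ^ ((-1:ℤ)^(j+1) * 2)
      = mono K (evec K (2*K) (-2)) z := by
    rw [← prodA (-2:ℤ) (by omega) z]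
    refine Finset.prod_congr rfl fun j _ => by rw [pow_succ]; ring_nf
  rw [hprod]

end Cl

open Cl

/-- for `1 ≤ k ≤ l ≤ K`,
`{s_{2k}, s_{2l+1}}_y = δ_{k,l} + s_{2k} s_{2l+1}`, identically on `(ℂ*)^{2K}`;
in particular it equals `1 + s_{2k}s_{2k+1}` for `l = k` and `s_{2k}s_{2l+1}` for `l > k`. -/

theorem cluster_bracket_even_odd (K : ℕ) (hK : 1 ≤ K) (y : YV K)
    (hy : ∀ i : Fin (2*K+1), (i:ℕ) ≠ 0 → y i ≠ 0)
    (k l : ℕ) (hk1 : 1 ≤ k) (hkl : k ≤ l) (hl : l ≤ K) :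
    lcBr K (sY K (2*k)) (sY K (2*l+1)) y
      = (if k = l then 1 else 0) + sY K (2*k) y * sY K (2*l+1) y := by
  have hkK : k ≤ K := le_trans hkl hl
  have h2k : 2*k < 2*K+1 := by omega
  have hnz1 : y ⟨2*k, h2k⟩ ≠ 0 := hy ⟨2*k, h2k⟩ (by simp; omega)
  have hev1 : ∀ᶠ z in nhds y, z ⟨2*k, h2k⟩ ≠ 0 :=
    ((continuous_apply (⟨2*k, h2k⟩ : Fin (2*K+1))).continuousAt).eventually
      (eventually_ne_nhds hnz1)
  have hrep1 : sY K (2*k) =ᶠ[nhds y]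
      (fun z => mono K (evec K (2*k) 2) z + mono K (evec K (2*k-1) 2) z) :=
    hev1.mono (fun z hz => sY_even_rep hk1 hkK z hz)
  have hE1 := evec_ne (K := K) (n := 2*k) 2 hy
  have hE2 := evec_ne (K := K) (n := 2*k-1) 2 hy
  have hF1 := evec_ne (K := K) (n := 2*l+1) (-2) hy
  have hF2 := evec_ne (K := K) (n := 2*l) (-2) hy
  have dE1 : DifferentiableAt ℂ (mono K (evec K (2*k) 2)) y := mono_diff _ _ hE1
  have dE2 : DifferentiableAt ℂ (mono K (evec K (2*k-1) 2)) y := mono_diff _ _ hE2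
  have dF1 : DifferentiableAt ℂ (mono K (evec K (2*l+1) (-2))) y := mono_diff _ _ hF1
  have dF2 : DifferentiableAt ℂ (mono K (evec K (2*l) (-2))) y := mono_diff _ _ hF2
  by_cases hlK : l < K
  · -- case l < K
    have h2l : 2*l+1 < 2*K+1 := by omega
    have hnz2 : y ⟨2*l+1, h2l⟩ ≠ 0 := hy ⟨2*l+1, h2l⟩ (by simp)
    have hev2 : ∀ᶠ z in nhds y, z ⟨2*l+1, h2l⟩ ≠ 0 :=
      ((continuous_apply (⟨2*l+1, h2l⟩ : Fin (2*K+1))).continuousAt).eventually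
        (eventually_ne_nhds hnz2)
    have hrep2 : sY K (2*l+1) =ᶠ[nhds y]
        (fun z => -(mono K (evec K (2*l+1) (-2)) z + mono K (evec K (2*l) (-2)) z)) :=
      hev2.mono (fun z hz => sY_odd_rep (le_trans hk1 hkl) hlK z hz)
    have w11 : omegaS K (evec K (2*k) 2) (evec K (2*l+1) (-2)) = 4 := by
      rw [omega_evec (by omega) (by omega) (by omega), if_pos (by omega)]
    have w12 : omegaS K (evec K (2*k) 2) (evec K (2*l) (-2))
        = if 2*k < 2*l then 4 else 0 :=
      omega_evec (by omega) (by omega) (by omega)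
    have w21 : omegaS K (evec K (2*k-1) 2) (evec K (2*l+1) (-2)) = 4 := by
      rw [omega_evec (by omega) (by omega) (by omega), if_pos (by omega)]
    have w22 : omegaS K (evec K (2*k-1) 2) (evec K (2*l) (-2)) = 4 := by
      rw [omega_evec (by omega) (by omega) (by omega), if_pos (by omega)]
    have key : lcBr K (sY K (2*k)) (sY K (2*l+1)) y
        = -(((omegaS K (evec K (2*k) 2) (evec K (2*l+1) (-2)) : ℤ) : ℂ) / 4 *
              (mono K (evec K (2*k) 2) y * mono K (evec K (2*l+1) (-2)) y)
            + ((omegaS K (evec K (2*k) 2) (evec K (2*l) (-2)) : ℤ) : ℂ) / 4 *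
              (mono K (evec K (2*k) 2) y * mono K (evec K (2*l) (-2)) y)
            + (((omegaS K (evec K (2*k-1) 2) (evec K (2*l+1) (-2)) : ℤ) : ℂ) / 4 *
              (mono K (evec K (2*k-1) 2) y * mono K (evec K (2*l+1) (-2)) y)
            + ((omegaS K (evec K (2*k-1) 2) (evec K (2*l) (-2)) : ℤ) : ℂ) / 4 *
              (mono K (evec K (2*k-1) 2) y * mono K (evec K (2*l) (-2)) y))) := by
      calc lcBr K (sY K (2*k)) (sY K (2*l+1)) y
          = lcBr K (fun z => mono K (evec K (2*k) 2) z + mono K (evec K (2*k-1) 2) z)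
              (fun z => -(mono K (evec K (2*l+1) (-2)) z + mono K (evec K (2*l) (-2)) z)) y :=
            lcBr_congr hrep1 hrep2
        _ = -(lcBr K (fun z => mono K (evec K (2*k) 2) z + mono K (evec K (2*k-1) 2) z)
              (fun z => mono K (evec K (2*l+1) (-2)) z + mono K (evec K (2*l) (-2)) z) y) :=
            lcBr_neg_right
        _ = -(lcBr K (mono K (evec K (2*k) 2))
                (fun z => mono K (evec K (2*l+1) (-2)) z + mono K (evec K (2*l) (-2)) z) y
              + lcBr K (mono K (evec K (2*k-1) 2))
                (fun z => mono K (evec K (2*l+1) (-2)) z + mono K (evec K (2*l) (-2)) z) y) := by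
            rw [lcBr_add_left dE1 dE2]
        _ = -((lcBr K (mono K (evec K (2*k) 2)) (mono K (evec K (2*l+1) (-2))) y
              + lcBr K (mono K (evec K (2*k) 2)) (mono K (evec K (2*l) (-2))) y)
              + (lcBr K (mono K (evec K (2*k-1) 2)) (mono K (evec K (2*l+1) (-2))) y
              + lcBr K (mono K (evec K (2*k-1) 2)) (mono K (evec K (2*l) (-2))) y)) := by
            rw [lcBr_add_right dF1 dF2, lcBr_add_right dF1 dF2]
        _ = _ := by
            rw [lcBr_mono _ _ y hE1 hF1, lcBr_mono _ _ y hE1 hF2,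
              lcBr_mono _ _ y hE2 hF1, lcBr_mono _ _ y hE2 hF2]
    rw [key, w11, w12, w21, w22, hrep1.eq_of_nhds, hrep2.eq_of_nhds]
    by_cases hkeq : k = l
    · have hone : mono K (evec K (2*k) 2) y * mono K (evec K (2*l) (-2)) y = 1 := by
        rw [hkeq, evec_neg]
        exact mono_neg_mul _ _ (evec_ne 2 hy)
      rw [if_pos hkeq, if_neg (by omega)]
      push_cast
      linear_combination hone
    · rw [if_neg hkeq, if_pos (by omega)]
      push_cast
      ring
  · -- case l = K
    have hlK' : l = K := by omega
    have hrep2 : sY K (2*l+1) =ᶠ[nhds y] (fun z => -(mono K (evec K (2*l) (-2)) z)) :=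
      Filter.Eventually.of_forall (fun z => by rw [hlK']; exact sY_topodd_rep hK z)
    have w12 : omegaS K (evec K (2*k) 2) (evec K (2*l) (-2))
        = if 2*k < 2*l then 4 else 0 :=
      omega_evec (by omega) (by omega) (by omega)
    have w22 : omegaS K (evec K (2*k-1) 2) (evec K (2*l) (-2)) = 4 := by
      rw [omega_evec (by omega) (by omega) (by omega), if_pos (by omega)]
    have key : lcBr K (sY K (2*k)) (sY K (2*l+1)) y
        = -(((omegaS K (evec K (2*k) 2) (evec K (2*l) (-2)) : ℤ) : ℂ) / 4 *
              (mono K (evec K (2*k) 2) y * mono K (evec K (2*l) (-2)) y)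
            + ((omegaS K (evec K (2*k-1) 2) (evec K (2*l) (-2)) : ℤ) : ℂ) / 4 *
              (mono K (evec K (2*k-1) 2) y * mono K (evec K (2*l) (-2)) y)) := by
      calc lcBr K (sY K (2*k)) (sY K (2*l+1)) y
          = lcBr K (fun z => mono K (evec K (2*k) 2) z + mono K (evec K (2*k-1) 2) z)
              (fun z => -(mono K (evec K (2*l) (-2)) z)) y :=
            lcBr_congr hrep1 hrep2
        _ = -(lcBr K (fun z => mono K (evec K (2*k) 2) z + mono K (evec K (2*k-1) 2) z)
              (mono K (evec K (2*l) (-2))) y) :=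
            lcBr_neg_right
        _ = -(lcBr K (mono K (evec K (2*k) 2)) (mono K (evec K (2*l) (-2))) y
              + lcBr K (mono K (evec K (2*k-1) 2)) (mono K (evec K (2*l) (-2))) y) := by
            rw [lcBr_add_left dE1 dE2]
        _ = _ := by
            rw [lcBr_mono _ _ y hE1 hF2, lcBr_mono _ _ y hE2 hF2]
    rw [key, w12, w22, hrep1.eq_of_nhds, hrep2.eq_of_nhds]
    by_cases hkeq : k = l
    · have hone : mono K (evec K (2*k) 2) y * mono K (evec K (2*l) (-2)) y = 1 := by
        rw [hkeq, evec_neg]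
        exact mono_neg_mul _ _ (evec_ne 2 hy)
      rw [if_pos hkeq, if_neg (by omega)]
      push_cast
      linear_combination hone
    · rw [if_neg hkeq, if_pos (by omega)]
      push_cast
      ring
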